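/- Let ℓ be an odd positive natural number. Then 2 * Σ_{i=(ℓ+1)/2}^{ℓ} i * C(ℓ, i) = ℓ * (2^{ℓ-1} + C(ℓ-1, (ℓ-1)/2)). -/

import Mathlib

lemma halfsum (m : ℕ) :
    2 * ∑ j ∈ Finset.Icc m (2*m), Nat.choose (2*m) j
      = 2^(2*m) + Nat.choose (2*m) m := by
  have h1 : ∑ j ∈ Finset.range (2*m+1), Nat.choose (2*m) j = 2^(2*m) :=
    Nat.sum_range_choose (2*m)
  have h2 : Finset.range (2*m+1) = Finset.range m ∪ Finset.Icc m (2*m) := by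
    ext x; simp only [Finset.mem_range, Finset.mem_union, Finset.mem_Icc]; omega
  have hdisj : Disjoint (Finset.range m) (Finset.Icc m (2*m)) := by
    simp only [Finset.disjoint_left, Finset.mem_range, Finset.mem_Icc]
    intro a ha; omega
  have hsplit : ∑ j ∈ Finset.range m, Nat.choose (2*m) j
      + ∑ j ∈ Finset.Icc m (2*m), Nat.choose (2*m) j = 2^(2*m) := by
    rw [← Finset.sum_union hdisj, ← h2, h1]
  have hsym : ∑ j ∈ Finset.range m, Nat.choose (2*m) j
      = ∑ j ∈ Finset.Icc (m+1) (2*m), Nat.choose (2*m) j := by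
    apply Finset.sum_nbij' (fun i => 2*m - i) (fun i => 2*m - i)
    · intro a ha; simp only [Finset.mem_range] at ha
      simp only [Finset.mem_Icc]; omega
    · intro a ha; simp only [Finset.mem_Icc] at ha
      simp only [Finset.mem_range]; omega
    · intro a ha; simp only [Finset.mem_range] at ha; omega
    · intro a ha; simp only [Finset.mem_Icc] at ha; omega
    · intro a ha; simp only [Finset.mem_range] at ha
      exact (Nat.choose_symm (by omega)).symm
  have hcons : ∑ j ∈ Finset.Icc m (2*m), Nat.choose (2*m) j
      = Nat.choose (2*m) m + ∑ j ∈ Finset.Icc (m+1) (2*m), Nat.choose (2*m) j := by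
    rw [Finset.Icc_eq_cons_Ioc (by omega), Finset.sum_cons]
    congr 1
    rw [← Finset.Icc_add_one_left_eq_Ioc]
  omega

theorem stmt_3 (ℓ : ℕ) (h1 : 1 ≤ ℓ) (h2 : Odd ℓ) :
    2 * ∑ i ∈ Finset.Icc ((ℓ + 1) / 2) ℓ, i * Nat.choose ℓ i =
      ℓ * (2 ^ (ℓ - 1) + Nat.choose (ℓ - 1) ((ℓ - 1) / 2)) := by
  obtain ⟨m, rfl⟩ := h2
  have e1 : (2*m+1+1)/2 = m+1 := by omega
  have e2 : 2*m+1-1 = 2*m := by omega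
  have e3 : (2*m)/2 = m := by omega
  rw [e1, e2, e3]
  have key : ∑ i ∈ Finset.Icc (m+1) (2*m+1), i * Nat.choose (2*m+1) i
      = (2*m+1) * ∑ j ∈ Finset.Icc m (2*m), Nat.choose (2*m) j := by
    rw [Finset.mul_sum]
    apply Finset.sum_nbij' (fun i => i - 1) (fun j => j + 1)
    · intro a ha; simp only [Finset.mem_Icc] at ha ⊢; omega
    · intro a ha; simp only [Finset.mem_Icc] at ha ⊢; omega
    · intro a ha; simp only [Finset.mem_Icc] at ha; omega
    · intro a ha; omega
    · intro a ha; simp only [Finset.mem_Icc] at ha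
      obtain ⟨k, rfl⟩ : ∃ k, a = k + 1 := ⟨a - 1, by omega⟩
      simp only [Nat.add_sub_cancel]
      have := Nat.add_one_mul_choose_eq (2*m) k
      rw [this]; ring
  rw [key, ← mul_assoc, mul_comm 2 (2*m+1), mul_assoc, halfsum]
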